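/- Let f be a piecewise linear function on a closed convex domain Γ ⊆ ℝ^d with distinct affine components g_1, …, g_n. Then there exists a finite family {S_j}_{j∈J} of subsets of {1,…,n} such that f(x) = max_{j∈J} min_{i∈S_j} g_i(x) for all x ∈ Γ. -/

import Mathlib

set_option maxHeartbeats 1000000


open Finset
open scoped Classical

noncomputable section

/-- Dot product on `Fin d → ℝ`. -/
def dotp {d : ℕ} (a x : Fin d → ℝ) : ℝ := ∑ i, a i * x i

/-- An (affine) linear function `x ↦ a ⬝ x + b`. -/
def IsAffineFn {d : ℕ} (g : (Fin d → ℝ) → ℝ) : Prop :=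
  ∃ (a : Fin d → ℝ) (b : ℝ), ∀ x, g x = dotp a x + b

/-- A closed domain: the closure of a nonempty open set. -/
def IsClosedDomain {d : ℕ} (q : Set (Fin d → ℝ)) : Prop :=
  ∃ U : Set (Fin d → ℝ), IsOpen U ∧ U.Nonempty ∧ q = closure U

/-- `f` is piecewise linear on `Γ`: a finite family of closed domains covers `Γ`
and `f` agrees with an affine function on each of them. -/
def IsPWLOn {d : ℕ} (Γ : Set (Fin d → ℝ)) (f : (Fin d → ℝ) → ℝ) : Prop :=
  ∃ 𝒬 : Finset (Set (Fin d → ℝ)),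
    (∀ q ∈ 𝒬, IsClosedDomain q) ∧ (Γ = ⋃ q ∈ 𝒬, (q : Set (Fin d → ℝ))) ∧
    ∀ q ∈ 𝒬, ∃ g, IsAffineFn g ∧ ∀ x ∈ q, f x = g x

/-- `f` is piecewise linear on `Γ` with all pieces taken from the family `g`. -/
def IsPWLWith {d n : ℕ} (Γ : Set (Fin d → ℝ)) (f : (Fin d → ℝ) → ℝ)
    (g : Fin n → (Fin d → ℝ) → ℝ) : Prop :=
  ∃ 𝒬 : Finset (Set (Fin d → ℝ)),
    (∀ q ∈ 𝒬, IsClosedDomain q) ∧ (Γ = ⋃ q ∈ 𝒬, (q : Set (Fin d → ℝ))) ∧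
    ∀ q ∈ 𝒬, ∃ i, ∀ x ∈ q, f x = g i x

/-- The hyperplane `h` (a pair `(a, b)` encoding `{x | a ⬝ x = b}`) separates `P` and `Q`:
they lie in opposite open halfspaces. -/
def SepH {d : ℕ} (h : (Fin d → ℝ) × ℝ) (P Q : Set (Fin d → ℝ)) : Prop :=
  ((∀ x ∈ P, dotp h.1 x < h.2) ∧ (∀ x ∈ Q, h.2 < dotp h.1 x)) ∨
  ((∀ x ∈ P, h.2 < dotp h.1 x) ∧ (∀ x ∈ Q, dotp h.1 x < h.2))

/-- The separation set `S(P,Q)`: hyperplanes of `H` separating `P` and `Q`. -/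
def sepSet {d : ℕ} (H : Finset ((Fin d → ℝ) × ℝ)) (P Q : Set (Fin d → ℝ)) :
    Finset ((Fin d → ℝ) × ℝ) :=
  H.filter (fun h => SepH h P Q)

/-- The hyperplane encoded by the pair `h = (a, b)`. -/
def hypSet {d : ℕ} (h : (Fin d → ℝ) × ℝ) : Set (Fin d → ℝ) := {x | dotp h.1 x = h.2}

/-- The union of the hyperplanes of the arrangement `H`. -/
def hypUnion {d : ℕ} (H : Finset ((Fin d → ℝ) × ℝ)) : Set (Fin d → ℝ) :=
  ⋃ h ∈ H, hypSet h

/-- The regions determined by a set `C`: the connected components of `C`. -/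
def regionsOf {d : ℕ} (C : Set (Fin d → ℝ)) : Set (Set (Fin d → ℝ)) :=
  {P | ∃ x ∈ C, P = connectedComponentIn C x}

/-- The complement (inside `interior Γ`) of the arrangement associated with the
family of components `g`: points where all the `g i` take pairwise distinct values. -/
def armCompl {d n : ℕ} (Γ : Set (Fin d → ℝ)) (g : Fin n → (Fin d → ℝ) → ℝ) :
    Set (Fin d → ℝ) :=
  {x | x ∈ interior Γ ∧ ∀ i j : Fin n, i ≠ j → g i x ≠ g j x}

/-- One-dimensional key lemma: a function covered on `[0,1]` by closed sets on each of
which it agrees with an affine function `t ↦ c i + s i * t` admits an index `i` with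
`c i ≤ φ 0` and `φ 1 ≤ c i + s i`. -/
lemma oneD {n : ℕ} (c s : Fin n → ℝ) (C : Fin n → Set ℝ) (hC : ∀ i, IsClosed (C i))
    (φ : ℝ → ℝ) (hφ : ∀ i, ∀ t ∈ C i, φ t = c i + s i * t)
    (hcov : ∀ t ∈ Set.Icc (0:ℝ) 1, ∃ i, t ∈ C i) :
    ∃ i, c i ≤ φ 0 ∧ φ 1 ≤ c i + s i := by
  -- nonempty index type
  obtain ⟨i0', hi0'⟩ := hcov 0 ⟨le_refl _, zero_le_one⟩
  set D : Fin n → Fin n → Set ℝ :=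
    fun i j => ({t : ℝ | c i ≤ φ 0} ∩ C j) ∩ {t | c j + s j * t ≤ c i + s i * t} with hD
  set T : Set ℝ := Set.Icc 0 1 ∩ ⋃ i, ⋃ j, D i j with hT
  have memT : ∀ t, t ∈ T ↔ t ∈ Set.Icc (0:ℝ) 1 ∧
      ∃ i j, c i ≤ φ 0 ∧ t ∈ C j ∧ c j + s j * t ≤ c i + s i * t := by
    intro t
    simp only [hT, hD, Set.mem_inter_iff, Set.mem_iUnion, Set.mem_setOf_eq]
    tauto
  have memT' : ∀ t ∈ Set.Icc (0:ℝ) 1,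
      (∃ i, c i ≤ φ 0 ∧ φ t ≤ c i + s i * t) → t ∈ T := by
    intro t ht ⟨i, hi, hle⟩
    obtain ⟨j, hj⟩ := hcov t ht
    exact (memT t).2 ⟨ht, i, j, hi, hj, by rw [← hφ j t hj]; exact hle⟩
  have memT'' : ∀ t ∈ T, ∃ i, c i ≤ φ 0 ∧ φ t ≤ c i + s i * t := by
    intro t ht
    obtain ⟨_, i, j, hi, hj, hle⟩ := (memT t).1 ht
    exact ⟨i, hi, by rw [hφ j t hj]; exact hle⟩
  have hTc : IsClosed T := by
    refine isClosed_Icc.inter (isClosed_iUnion_of_finite fun i =>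
      isClosed_iUnion_of_finite fun j => ?_)
    refine (IsClosed.inter ?_ (hC j)).inter ?_
    · by_cases h : c i ≤ φ 0
      · simp only [h, Set.setOf_true]; exact isClosed_univ
      · simp only [h, Set.setOf_false]; exact isClosed_empty
    · exact isClosed_le (continuous_const.add (continuous_const.mul continuous_id))
        (continuous_const.add (continuous_const.mul continuous_id))
  have hTne : T.Nonempty := by
    refine ⟨0, memT' 0 ⟨le_refl _, zero_le_one⟩ ⟨i0', ?_, ?_⟩⟩
    · rw [hφ i0' 0 hi0']; nlinarith []
    · rw [hφ i0' 0 hi0']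
  have hTbdd : BddAbove T := BddAbove.mono (Set.inter_subset_left) bddAbove_Icc
  set cs := sSup T with hcs
  have hcsT : cs ∈ T := hTc.csSup_mem hTne hTbdd
  by_cases h1T : (1:ℝ) ∈ T
  · obtain ⟨i, hi, hle⟩ := memT'' 1 h1T
    exact ⟨i, hi, by linarith⟩
  · exfalso
    have hcsIcc : cs ∈ Set.Icc (0:ℝ) 1 := ((memT cs).1 hcsT).1
    have hcs1 : cs < 1 := lt_of_le_of_ne hcsIcc.2 (fun h => h1T (h ▸ hcsT))
    obtain ⟨i, hgood, hge⟩ := memT'' cs hcsT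
    -- find k' whose piece accumulates at cs from the right
    have hkey : ∃ k, ∀ ε > (0:ℝ), ∃ t, t ∈ C k ∧ cs < t ∧ t ≤ min 1 (cs + ε) := by
      by_contra hcon
      push_neg at hcon
      choose ε hε hεe using hcon
      set ε0 := Finset.univ.inf' ⟨i0', Finset.mem_univ _⟩ ε with hε0
      have hε0pos : 0 < ε0 := by
        rw [hε0]; apply (Finset.lt_inf'_iff _).2
        exact fun k _ => hε k
      set t0 := min 1 (cs + ε0) with ht0
      have hcst0 : cs < t0 := lt_min hcs1 (by linarith)
      have ht0Icc : t0 ∈ Set.Icc (0:ℝ) 1 :=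
        ⟨le_trans hcsIcc.1 hcst0.le, min_le_left _ _⟩
      obtain ⟨k, hk⟩ := hcov t0 ht0Icc
      have hlt := hεe k t0 hk hcst0
      have hle : t0 ≤ min 1 (cs + ε k) := by
        refine le_min (min_le_left _ _) (le_trans (min_le_right _ _) ?_)
        have : ε0 ≤ ε k := Finset.inf'_le _ (Finset.mem_univ k)
        linarith
      exact absurd hle (not_le.mpr hlt)
    obtain ⟨k', hk'⟩ := hkey
    have hcsk' : cs ∈ C k' := by
      rw [← (hC k').closure_eq]
      rw [Metric.mem_closure_iff]
      intro ε hε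
      obtain ⟨t, htC, htlt, htle⟩ := hk' (ε/2) (by linarith)
      refine ⟨t, htC, ?_⟩
      have h2 : t ≤ cs + ε/2 := le_trans htle (min_le_right _ _)
      rw [Real.dist_eq, abs_sub_comm, abs_of_nonneg (by linarith)]
      linarith
    have hφcs : φ cs = c k' + s k' * cs := hφ k' cs hcsk'
    obtain ⟨t1, ht1C, ht1lt, ht1le⟩ := hk' 1 one_pos
    have ht1le1 : t1 ≤ 1 := le_trans ht1le (min_le_left _ _)
    have ht1Icc : t1 ∈ Set.Icc (0:ℝ) 1 := ⟨le_trans hcsIcc.1 ht1lt.le, ht1le1⟩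
    have ht1nT : t1 ∉ T := fun h => absurd (le_csSup hTbdd h) (not_le.mpr ht1lt)
    by_cases hcase : c k' + s k' * t1 ≤ c i + s i * t1
    · exact ht1nT (memT' t1 ht1Icc ⟨i, hgood, by rw [hφ k' t1 ht1C]; exact hcase⟩)
    · push_neg at hcase
      have hs : s i < s k' := by nlinarith [hcsIcc.1]
      have hgood' : c k' ≤ φ 0 := by nlinarith [hcsIcc.1]
      exact ht1nT (memT' t1 ht1Icc ⟨k', hgood', le_of_eq (hφ k' t1 ht1C)⟩)

lemma dotp_seg {d : ℕ} (a x y : Fin d → ℝ) (t : ℝ) :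
    dotp a (x + t • (y - x)) = dotp a x + t * (dotp a y - dotp a x) := by
  simp only [dotp, Pi.add_apply, Pi.smul_apply, Pi.sub_apply, smul_eq_mul]
  rw [← Finset.sum_sub_distrib, Finset.mul_sum, ← Finset.sum_add_distrib]
  exact Finset.sum_congr rfl fun i _ => by ring

lemma affine_seg {d : ℕ} {g : (Fin d → ℝ) → ℝ} (hg : IsAffineFn g)
    (x y : Fin d → ℝ) (t : ℝ) :
    g (x + t • (y - x)) = g x + (g y - g x) * t := by
  obtain ⟨a, b, hab⟩ := hg
  simp only [hab, dotp_seg]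
  ring

/-- Key lemma (Ovchinnikov): for any two points of a convex set covered by closed pieces on
each of which `f` agrees with some `g i`, there is an index `i` with `g i x ≤ f x` and
`f y ≤ g i y`. -/
lemma key {d n : ℕ} (hn : 0 < n) {Γ : Set (Fin d → ℝ)} (hΓv : Convex ℝ Γ)
    {f : (Fin d → ℝ) → ℝ} {g : Fin n → (Fin d → ℝ) → ℝ}
    (hga : ∀ i, IsAffineFn (g i))
    (𝒬 : Finset (Set (Fin d → ℝ))) (hcl : ∀ q ∈ 𝒬, IsClosed q)
    (hcov : Γ = ⋃ q ∈ 𝒬, (q : Set (Fin d → ℝ)))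
    (hag : ∀ q ∈ 𝒬, ∃ i, ∀ z ∈ q, f z = g i z)
    {x y : Fin d → ℝ} (hx : x ∈ Γ) (hy : y ∈ Γ) :
    ∃ i, g i x ≤ f x ∧ f y ≤ g i y := by
  have hag' : ∀ q : Set (Fin d → ℝ), ∃ i, q ∈ 𝒬 → ∀ z ∈ q, f z = g i z := by
    intro q
    by_cases hq : q ∈ 𝒬
    · exact (hag q hq).imp fun i h _ => h
    · exact ⟨⟨0, hn⟩, fun h => absurd h hq⟩
  choose idx hidx using hag'
  set γ : ℝ → (Fin d → ℝ) := fun t => x + t • (y - x) with hγ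
  have hγcont : Continuous γ := continuous_const.add (continuous_id.smul continuous_const)
  have hseg : ∀ t ∈ Set.Icc (0:ℝ) 1, γ t ∈ Γ := by
    intro t ht
    have := hΓv hx hy (by linarith [ht.2] : (0:ℝ) ≤ 1 - t) ht.1 (by ring)
    convert this using 1
    funext j
    simp only [hγ, Pi.add_apply, Pi.smul_apply, Pi.sub_apply, smul_eq_mul]
    ring
  set C : Fin n → Set ℝ := fun i => ⋃ q ∈ 𝒬.filter (fun q => idx q = i), γ ⁻¹' q with hC
  have hCc : ∀ i, IsClosed (C i) := by
    intro i
    exact Set.Finite.isClosed_biUnion (𝒬.filter _).finite_toSet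
      (fun q hq => (hcl q (Finset.mem_of_mem_filter q hq)).preimage hγcont)
  have h1 := oneD (fun i => g i x) (fun i => g i y - g i x) C hCc (fun t => f (γ t))
    (by
      intro i t ht
      simp only [hC, Set.mem_iUnion, Set.mem_preimage] at ht
      obtain ⟨q, hq, hγt⟩ := ht
      obtain ⟨hq𝒬, hqi⟩ := Finset.mem_filter.1 hq
      show f (γ t) = g i x + (g i y - g i x) * t
      rw [hidx q hq𝒬 (γ t) hγt, hqi, affine_seg (hga i) x y t])
    (by
      intro t ht
      have := hseg t ht
      rw [hcov] at this
      obtain ⟨q, hq, hγt⟩ := Set.mem_iUnion₂.1 this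
      refine ⟨idx q, ?_⟩
      simp only [hC, Set.mem_iUnion, Set.mem_preimage]
      exact ⟨q, Finset.mem_filter.2 ⟨hq, rfl⟩, hγt⟩)
  obtain ⟨i, h0, h1'⟩ := h1
  have hγ0 : γ 0 = x := by simp [hγ]
  have hγ1 : γ 1 = y := by
    funext j
    simp only [hγ, Pi.add_apply, Pi.smul_apply, Pi.sub_apply, smul_eq_mul]
    ring
  have h0' : g i x ≤ f (γ 0) := h0
  have h1'' : f (γ 1) ≤ g i x + (g i y - g i x) := h1'
  rw [hγ0] at h0'
  rw [hγ1] at h1''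
  exact ⟨i, h0', by linarith⟩

/-- main theorem, part (a): every piecewise linear function on a closed
convex domain is a max–min polynomial of its components. -/
theorem pwl_max_min_representation {d n : ℕ} (hn : 0 < n)
    {Γ : Set (Fin d → ℝ)} (hΓc : IsClosed Γ) (hΓv : Convex ℝ Γ)
    {f : (Fin d → ℝ) → ℝ} {g : Fin n → (Fin d → ℝ) → ℝ}
    (hga : ∀ i, IsAffineFn (g i)) (hgd : Function.Injective g)
    (hf : IsPWLWith Γ f g) :
    ∃ (m : ℕ) (hm : 0 < m) (S : Fin m → Finset (Fin n)) (hS : ∀ j, (S j).Nonempty),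
      ∀ x ∈ Γ, f x =
        Finset.univ.sup' ⟨⟨0, hm⟩, Finset.mem_univ _⟩
          (fun j => (S j).inf' (hS j) (fun i => g i x)) := by
  obtain ⟨𝒬, hdom, hcov, hag⟩ := hf
  have hcl : ∀ q ∈ 𝒬, IsClosed q := by
    intro q hq
    obtain ⟨U, _, _, rfl⟩ := hdom q hq
    exact isClosed_closure
  rcases Set.eq_empty_or_nonempty Γ with hΓe | ⟨y0, hy0⟩
  · exact ⟨1, one_pos, fun _ => {⟨0, hn⟩}, fun _ => Finset.singleton_nonempty _,
      fun x hx => absurd hx (hΓe ▸ Set.notMem_empty x)⟩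
  · -- the pointwise upper index sets
    set Sof : (Fin d → ℝ) → Finset (Fin n) :=
      fun y => Finset.univ.filter (fun i => f y ≤ g i y) with hSof
    have hSofne : ∀ y ∈ Γ, (Sof y).Nonempty := by
      intro y hy
      rw [hcov] at hy
      obtain ⟨q, hq, hyq⟩ := Set.mem_iUnion₂.1 hy
      obtain ⟨i, hi⟩ := hag q hq
      exact ⟨i, Finset.mem_filter.2 ⟨Finset.mem_univ _, le_of_eq (hi y hyq)⟩⟩
    set 𝒮 : Finset (Finset (Fin n)) :=
      Finset.univ.filter (fun S => ∃ y ∈ Γ, Sof y = S) with h𝒮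
    have h𝒮mem : ∀ y ∈ Γ, Sof y ∈ 𝒮 := fun y hy =>
      Finset.mem_filter.2 ⟨Finset.mem_univ _, y, hy, rfl⟩
    have h𝒮ne : 𝒮.Nonempty := ⟨Sof y0, h𝒮mem y0 hy0⟩
    have hm : 0 < 𝒮.card := Finset.card_pos.2 h𝒮ne
    set e := 𝒮.equivFin with he
    refine ⟨𝒮.card, hm, fun j => (e.symm j : Finset (Fin n)), ?_, ?_⟩
    · intro j
      have hmem := (e.symm j).2
      obtain ⟨_, y, hy, hSy⟩ := Finset.mem_filter.1 hmem
      show ((e.symm j : Finset (Fin n))).Nonempty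
      rw [← hSy]
      exact hSofne y hy
    · intro x hx
      refine le_antisymm ?_ (Finset.sup'_le _ _ ?_)
      · -- f x ≤ sup' : use the set Sof x
        have hj := h𝒮mem x hx
        refine le_trans ?_ (Finset.le_sup' _ (Finset.mem_univ (e ⟨Sof x, hj⟩)))
        refine Finset.le_inf' _ _ ?_
        intro i hi
        have : (e.symm (e ⟨Sof x, hj⟩) : Finset (Fin n)) = Sof x := by
          rw [Equiv.symm_apply_apply]
        have hi' : i ∈ (e.symm (e ⟨Sof x, hj⟩) : Finset (Fin n)) := hi
        rw [this] at hi'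
        exact (Finset.mem_filter.1 hi').2
      · -- each min term is ≤ f x
        intro j _
        have hmem := (e.symm j).2
        obtain ⟨_, y, hy, hSy⟩ := Finset.mem_filter.1 hmem
        obtain ⟨i, hix, hiy⟩ := key hn hΓv hga 𝒬 hcl hcov hag hx hy
        have hiS : i ∈ (e.symm j : Finset (Fin n)) := by
          rw [← hSy]
          exact Finset.mem_filter.2 ⟨Finset.mem_univ _, hiy⟩
        exact le_trans (Finset.inf'_le _ hiS) hix
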